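/- arXiv:1612.03358 — 6 statements merged into one kernel-verified Lean document; each statement's English description precedes it below -/
import Mathlib

section
/- Define groups E_n by E_1 = Aut(T_1) ≅ S_3 and, for n ≥ 2, E_n = (E_{n-1} ≀ Aut(T_1)) ∩ ker(sgn_2), where sgn_2 is the composition of restriction Aut(T_n) → Aut(T_2) with the sign of the permutation action on the 9 leaves of T_2. Then |E_n| = 2^{3^{n-1}} · 3^{(3^n - 1)/2} for all n ≥ 1. -/
open Equiv

/-- Leaves of the regular ternary rooted tree of height `n`. -/
def L : ℕ → Type
  | 0 => PUnit
  | n+1 => Fin 3 × L n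

instance Ldec : ∀ n, DecidableEq (L n)
  | 0 => inferInstanceAs (DecidableEq PUnit)
  | n+1 => letI := Ldec n; inferInstanceAs (DecidableEq (Fin 3 × L n))

instance Lfin : ∀ n, Fintype (L n)
  | 0 => inferInstanceAs (Fintype PUnit)
  | n+1 => letI := Lfin n; inferInstanceAs (Fintype (Fin 3 × L n))

/-- The wreath-product construction `G ≀ S_3` (as a type). -/
def W (G : Type) : Type := (Fin 3 → G) × Equiv.Perm (Fin 3)

instance Wgroup (G : Type) [Group G] : Group (W G) where
  mul x y := (fun i => x.1 (y.2 i) * y.1 i, x.2 * y.2)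
  one := (fun _ => 1, 1)
  inv x := (fun i => (x.1 (x.2⁻¹ i))⁻¹, x.2⁻¹)
  mul_assoc x y z := Prod.ext (funext fun i => mul_assoc _ _ _) (mul_assoc _ _ _)
  one_mul x := Prod.ext (funext fun i => one_mul _) (one_mul _)
  mul_one x := Prod.ext (funext fun i => mul_one _) (mul_one _)
  inv_mul_cancel x := Prod.ext (funext fun i => by
      show (x.1 (x.2⁻¹ (x.2 i)))⁻¹ * x.1 i = 1
      rw [show x.2⁻¹ (x.2 i) = i from x.2.symm_apply_apply i, inv_mul_cancel]) (inv_mul_cancel _)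

/-- `A n` is the automorphism group of the ternary rooted tree of height `n`,
realized as the `n`-fold iterated wreath product of `S_3 = Aut(T_1)`. -/
def A : ℕ → Type
  | 0 => PUnit
  | n+1 => W (A n)

instance Agroup : ∀ n, Group (A n)
  | 0 => inferInstanceAs (Group PUnit)
  | n+1 => @Wgroup (A n) (Agroup n)

/-- The faithful action of `A n` on the `3^n` leaves of the tree. -/
def toPerm : ∀ n, A n →* Equiv.Perm (L n)
  | 0 => 1
  | n+1 =>
    { toFun := fun x : W (A n) => Equiv.prodShear x.2 (fun i => toPerm n (x.1 i))
      map_one' := by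
        apply Equiv.ext
        intro l
        show ((1 : Equiv.Perm (Fin 3)) l.1, toPerm n (1 : A n) l.2) = l
        rw [map_one]
        exact Prod.ext rfl rfl
      map_mul' := by
        intro x y
        apply Equiv.ext
        intro l
        show ((x * y).2 l.1, toPerm n ((x * y).1 l.1) l.2)
          = (x.2 (y.2 l.1), toPerm n (x.1 (y.2 l.1)) ((toPerm n (y.1 l.1)) l.2))
        refine Prod.ext rfl ?_
        show toPerm n (x.1 (y.2 l.1) * y.1 l.1) l.2 = _
        rw [map_mul]
        rfl }

/-- Restriction `Aut(T_{n+1}) → Aut(T_n)` to the subtree spanned by the first `n` levels. -/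
def res : ∀ n, A (n+1) →* A n
  | 0 => 1
  | n+1 =>
    { toFun := fun x : W (A (n+1)) => ((fun i => res n (x.1 i), x.2) : W (A n))
      map_one' := Prod.ext (funext fun _ => map_one (res n)) rfl
      map_mul' := fun x y => Prod.ext (funext fun i => map_mul (res n) _ _) rfl }

/-- Restriction `Aut(T_{n+2}) → Aut(T_2)`. -/
def resTo2 : ∀ n, A (n+2) →* A 2
  | 0 => MonoidHom.id _
  | n+1 => (resTo2 n).comp (res (n+2))

/-- `sgn_2` : the sign of the permutation induced on the 9 leaves of `T_2`. -/
def sgn2 (n : ℕ) : A (n+2) →* ℤˣ :=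
  Equiv.Perm.sign.comp ((toPerm 2).comp (resTo2 n))

/-- Given a subgroup `H ≤ Aut(T_n)`, the subgroup of `Aut(T_{n+1})` consisting of elements
all of whose three level-1 components lie in `H` (the base of the wreath product `H ≀ S_3`). -/
def lift1 {n : ℕ} (Hn : Subgroup (A n)) : Subgroup (A (n+1)) where
  carrier := {x : W (A n) | ∀ i, x.1 i ∈ Hn}
  one_mem' := fun _ => Hn.one_mem
  mul_mem' := fun {x y} hx hy i => Hn.mul_mem (hx _) (hy _)
  inv_mem' := fun {x} hx i => Hn.inv_mem (hx _)

/-- The groups `E_n`: `E_1 = Aut(T_1)` and `E_n = (E_{n-1} ≀ Aut(T_1)) ∩ ker sgn_2`. -/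
def E : ∀ n, Subgroup (A n)
  | 0 => ⊤
  | 1 => ⊤
  | n+2 => lift1 (E (n+1)) ⊓ (sgn2 n).ker

/-- The projection onto the top (level-1) symmetric group component. -/
def sndHom (n : ℕ) : A (n+1) →* Equiv.Perm (Fin 3) where
  toFun := fun x : W (A n) => x.2
  map_one' := rfl
  map_mul' := fun _ _ => rfl

/-- The cyclic subgroup `C_3 ≤ S_3`. -/
def C3 : Subgroup (Equiv.Perm (Fin 3)) := Subgroup.zpowers (finRotate 3)

/-- The groups `H_n = [C_3]^n`, the iterated wreath product of cyclic groups of order 3. -/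
def Hgp : ∀ n, Subgroup (A n)
  | 0 => ⊤
  | n+1 => lift1 (Hgp n) ⊓ C3.comap (sndHom n)

/-- The elements `ν_n`: `ν_1 = (12)`, `ν_n = ((ν_{n-1},1,1),1)`. -/
def ν : ∀ n, A n
  | 0 => 1
  | 1 => ((fun _ => (1 : A 0), Equiv.swap 0 1) : W (A 0))
  | n+2 => ((fun i => if i = 0 then ν (n+1) else 1, 1) : W (A (n+1)))

/-- The elements `τ_n`: `τ_1 = (12)`, `τ_n = ((τ_{n-1},1,1),(12))`. -/
def τ : ∀ n, A n
  | 0 => 1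
  | 1 => ((fun _ => (1 : A 0), Equiv.swap 0 1) : W (A 0))
  | n+2 => ((fun i => if i = 0 then τ (n+1) else 1, Equiv.swap 0 1) : W (A (n+1)))

/-- Truncation of a leaf of `T_n` to the vertex at level `m` below it. -/
def take : ∀ (n m : ℕ), L n → L m
  | _, 0, _ => PUnit.unit
  | 0, m+1, _ => ((0, take 0 m PUnit.unit) : Fin 3 × L m)
  | n+1, m+1, l => ((l.1, take n m l.2) : Fin 3 × L m)
instance Afin : ∀ n, Fintype (A n)
  | 0 => inferInstanceAs (Fintype PUnit)
  | n+1 => letI := Afin n; inferInstanceAs (Fintype ((Fin 3 → A n) × Equiv.Perm (Fin 3)))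

def tσ (n : ℕ) : A (n+1) := ((fun _ => (1 : A n), Equiv.swap 0 1) : W (A n))

lemma res_tσ (n : ℕ) : res (n+1) (tσ (n+1)) = tσ n :=
  Prod.ext (funext fun _ => map_one (res n)) rfl

lemma resTo2_tσ : ∀ n, resTo2 n (tσ (n+1)) = tσ 1
  | 0 => rfl
  | n+1 => by
    show resTo2 n (res (n+2) (tσ (n+2))) = tσ 1
    rw [res_tσ]; exact resTo2_tσ n

lemma sgn2_tσ (n : ℕ) : sgn2 n (tσ (n+1)) = -1 := by
  show Equiv.Perm.sign (toPerm 2 (resTo2 n (tσ (n+1)))) = -1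
  rw [resTo2_tσ]; decide

def lift1Equiv {n : ℕ} (H : Subgroup (A n)) :
    lift1 H ≃ (Fin 3 → H) × Equiv.Perm (Fin 3) where
  toFun x := (fun i => ⟨x.1.1 i, x.2 i⟩, x.1.2)
  invFun p := ⟨((fun i => (p.1 i : A n)), p.2), fun i => (p.1 i).2⟩
  left_inv x := rfl
  right_inv p := rfl

lemma card_lift1 {n : ℕ} (H : Subgroup (A n)) :
    Nat.card (lift1 H) = Nat.card H ^ 3 * 6 := by
  rw [Nat.card_congr (lift1Equiv H), Nat.card_prod, Nat.card_fun]
  congr 1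
  · rw [Nat.card_eq_fintype_card (α := Fin 3)]; norm_num
  · rw [Nat.card_eq_fintype_card]; decide

def kerEquiv (n : ℕ) :
    ((sgn2 n).comp (lift1 (E (n+1))).subtype).ker ≃ E (n+2) where
  toFun y := ⟨y.1.1, Subgroup.mem_inf.mpr ⟨y.1.2, y.2⟩⟩
  invFun x := ⟨⟨x.1, (Subgroup.mem_inf.mp x.2).1⟩, (Subgroup.mem_inf.mp x.2).2⟩
  left_inv y := rfl
  right_inv x := rfl

lemma card_E_step (n : ℕ) :
    2 * Nat.card (E (n+2)) = Nat.card (E (n+1)) ^ 3 * 6 := by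
  set K := lift1 (E (n+1)) with hK
  let g : K →* ℤˣ := (sgn2 n).comp K.subtype
  have hsur : Function.Surjective g := by
    intro u
    rcases Int.units_eq_one_or u with h | h
    · exact ⟨1, by simp [h, map_one]⟩
    · refine ⟨⟨tσ (n+1), fun i => (E (n+1)).one_mem⟩, ?_⟩
      show sgn2 n (tσ (n+1)) = u
      rw [h, sgn2_tσ]
  have h1 : Nat.card K = Nat.card (K ⧸ g.ker) * Nat.card g.ker :=
    Subgroup.card_eq_card_quotient_mul_card_subgroup _
  have h2 : Nat.card (K ⧸ g.ker) = 2 := by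
    rw [Nat.card_congr (QuotientGroup.quotientKerEquivOfSurjective g hsur).toEquiv,
      Nat.card_eq_fintype_card]
    decide
  have h3 : Nat.card g.ker = Nat.card (E (n+2)) := Nat.card_congr (kerEquiv n)
  rw [← h3, ← h2, ← h1, hK, card_lift1]

lemma card_E_one : Nat.card (E 1) = 6 := by
  have : Nat.card (E 1) = Nat.card (A 1) :=
    Nat.card_congr Subgroup.topEquiv.toEquiv
  rw [this, Nat.card_eq_fintype_card]
  decide

/-- `|E_n| = 2^{3^{n-1}} · 3^{(3^n - 1)/2}` for all `n ≥ 1`. -/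
theorem card_E (n : ℕ) (hn : 1 ≤ n) :
    Nat.card (E n) = 2 ^ (3 ^ (n - 1)) * 3 ^ ((3 ^ n - 1) / 2) := by
  obtain ⟨m, rfl⟩ : ∃ m, n = m + 1 := ⟨n - 1, by omega⟩
  clear hn
  induction m with
  | zero => simpa using card_E_one
  | succ k ih =>
    have step := card_E_step k
    rw [ih] at step
    simp only [Nat.add_sub_cancel] at step ⊢
    have ha : 3 ^ (k+1) % 2 = 1 := by
      rw [Nat.pow_mod]; simp
    have h1 : (1:ℕ) ≤ 3 ^ (k+1) := Nat.one_le_pow _ _ (by norm_num)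
    have h32 : (3:ℕ) ^ (k+2) = 3 * 3 ^ (k+1) := by ring
    have he : (3 ^ (k+2) - 1) / 2 = 3 * ((3 ^ (k+1) - 1) / 2) + 1 := by omega
    have hp : (2:ℕ) ^ (3 ^ (k+1)) = (2 ^ (3 ^ k)) ^ 3 := by
      rw [← pow_mul, pow_succ]
    rw [he, hp]
    have : (2 ^ 3 ^ k * 3 ^ ((3 ^ (k + 1) - 1) / 2)) ^ 3 * 6
        = 2 * ((2 ^ 3 ^ k) ^ 3 * 3 ^ (3 * ((3 ^ (k + 1) - 1) / 2) + 1)) := by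
      rw [mul_pow, ← pow_mul]; ring
    rw [this] at step
    exact Nat.eq_of_mul_eq_mul_left (by norm_num) step
end

section
/- For the polynomial f(z) = −2z³ + 3z², the discriminant of the degree-9 polynomial f(f(z)) − x, regarded as a polynomial in z over ℚ(x), equals [2^{16} · 3^9 · x²(x−1)²]². In particular it is a perfect square in ℚ[x]. -/
open Polynomial

/-- The polynomial `f(z) = -2z³ + 3z²` over `ℚ(x)`. -/
noncomputable def fpoly : Polynomial (RatFunc ℚ) := -2 * X ^ 3 + 3 * X ^ 2

/-- The degree-9 polynomial `f(f(z)) - x` over `ℚ(x)`. -/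
noncomputable def p2 : Polynomial (RatFunc ℚ) := fpoly.comp fpoly - C RatFunc.X

instance : CharZero (RatFunc ℚ) :=
  charZero_of_injective_algebraMap (algebraMap ℚ (RatFunc ℚ)).injective

lemma p2_eq : p2 = C 16 * X^9 - C 72 * X^8 + C 108 * X^7 - C 42 * X^6 - C 36 * X^5
    + C 27 * X^4 - C RatFunc.X := by
  unfold p2 fpoly
  simp only [add_comp, mul_comp, pow_comp, X_comp, neg_comp, ofNat_comp,
    map_ofNat, neg_mul]
  push_cast
  ring_nf

lemma ev0 : p2.eval 0 = -RatFunc.X := by simp [p2, fpoly, eval_comp]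
lemma ev1 : p2.eval 1 = 1 - RatFunc.X := by simp [p2, fpoly, eval_comp]; norm_num
lemma ev32 : p2.eval (3/2) = -RatFunc.X := by
  simp [p2, fpoly, eval_comp]; ring_nf
lemma evm : p2.eval (-(1/2)) = 1 - RatFunc.X := by
  simp [p2, fpoly, eval_comp]; ring_nf

lemma hderiv : derivative p2
    = 36 * (X * (X - 1)) * (X^2 * (3 - 2*X)) * ((X - 1)^2 * (-(2*X + 1))) := by
  rw [p2_eq]
  simp only [derivative_add, derivative_sub, derivative_mul, derivative_pow, derivative_X,
    derivative_C, map_ofNat, derivative_ofNat, derivative_one, map_natCast, Nat.cast_ofNat]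
  push_cast
  ring

lemma p2_nd : p2.natDegree = 9 := by rw [p2_eq]; compute_degree!
lemma p2_lc : p2.leadingCoeff = 16 := by
  rw [leadingCoeff, p2_nd, p2_eq]
  simp [coeff_one]

local notation "K" => AlgebraicClosure (RatFunc ℚ)

/-- Evaluation of the derivative of the product `∏ (X - C (r i))` at a root. -/
lemma deriv_eval_aux (r : Fin 9 → K) (k : Fin 9) :
    eval (r k) (derivative (∏ i : Fin 9, (X - C (r i)))) =
      ∏ j ∈ Finset.univ.erase k, (r k - r j) := by
  classical
  rw [Finset.prod_eq_multiset_prod, derivative_prod]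
  rw [show ((Multiset.map (fun i => (Multiset.map (fun i => X - C (r i)) (Finset.univ.val.erase i)).prod * derivative (X - C (r i))) Finset.univ.val).sum : K[X]).eval (r k)
    = ∑ i : Fin 9, ((Multiset.map (fun i => X - C (r i)) (Finset.univ.val.erase i)).prod * derivative (X - C (r i))).eval (r k) from ?_]
  · rw [Finset.sum_eq_single k]
    · rw [← Finset.erase_val]
      rw [eval_mul]
      simp [eval_multiset_prod, Multiset.map_map, Finset.prod_eq_multiset_prod]
    · intro i _ hik
      rw [eval_mul]
      have h0 : (0:K) ∈ Multiset.map (fun j => eval (r k) (X - C (r j))) (Finset.univ.val.erase i) := by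
        refine Multiset.mem_map.2 ⟨k, ?_, by simp⟩
        rw [Multiset.mem_erase_of_ne (by simpa using (Ne.symm hik))]
        simp
      rw [eval_multiset_prod, Multiset.map_map]
      simp only [Function.comp]
      rw [Multiset.prod_eq_zero h0, zero_mul]
    · simp
  · rw [Finset.sum_eq_multiset_sum]
    have := map_multiset_sum (evalRingHom (r k)) (Multiset.map
          (fun i => (Multiset.map (fun i => X - C (r i)) (Finset.univ.val.erase i)).prod * derivative (X - C (r i)))
          Finset.univ.val)
    simpa [Multiset.map_map, Function.comp] using this

/-- The double product over off-diagonal pairs equals the square product over `i < j`. -/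
lemma offdiag_aux (r : Fin 9 → K) :
    ∏ k : Fin 9, ∏ j ∈ Finset.univ.erase k, (r k - r j)
      = ∏ q ∈ Finset.univ.filter (fun q : Fin 9 × Fin 9 => q.1 < q.2), (r q.1 - r q.2) ^ 2 := by
  classical
  set g : Fin 9 → Fin 9 → K := fun k j => if j = k then 1 else r k - r j with hg
  have h1 : ∏ k : Fin 9, ∏ j ∈ Finset.univ.erase k, (r k - r j)
      = ∏ q : Fin 9 × Fin 9, g q.1 q.2 := by
    rw [← Finset.univ_product_univ, Finset.prod_product']
    refine Finset.prod_congr rfl fun k _ => ?_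
    rw [← Finset.prod_erase (Finset.univ) (by simp [hg] : g k k = 1)]
    exact Finset.prod_congr rfl fun j hj => by
      simp [hg, (Finset.ne_of_mem_erase hj)]
  rw [h1, ← Finset.prod_filter_mul_prod_filter_not Finset.univ (fun q : Fin 9 × Fin 9 => q.1 < q.2)]
  have h2 : ∏ q ∈ Finset.univ.filter (fun q : Fin 9 × Fin 9 => ¬ q.1 < q.2), g q.1 q.2
      = ∏ q ∈ Finset.univ.filter (fun q : Fin 9 × Fin 9 => q.1 < q.2), g q.2 q.1 := by
    rw [← Finset.prod_filter_mul_prod_filter_not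
      (Finset.univ.filter (fun q : Fin 9 × Fin 9 => ¬ q.1 < q.2)) (fun q => q.2 < q.1)]
    have hd : ∏ q ∈ (Finset.univ.filter (fun q : Fin 9 × Fin 9 => ¬ q.1 < q.2)).filter
        (fun q => ¬ q.2 < q.1), g q.1 q.2 = 1 := by
      refine Finset.prod_eq_one fun q hq => ?_
      simp only [Finset.mem_filter] at hq
      have : q.2 = q.1 := le_antisymm (not_lt.1 hq.1.2) (not_lt.1 hq.2)
      simp [hg, this]
    rw [hd, mul_one]
    refine Finset.prod_nbij' (fun q => (q.2, q.1)) (fun q => (q.2, q.1)) ?_ ?_ ?_ ?_ ?_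
    · intro q hq; simp only [Finset.mem_filter] at hq ⊢; exact ⟨Finset.mem_univ _, hq.2⟩
    · intro q hq; simp only [Finset.mem_filter] at hq ⊢
      exact ⟨⟨Finset.mem_univ _, not_lt.2 (le_of_lt hq.2)⟩, hq.2⟩
    · intro q _; rfl
    · intro q _; rfl
    · intro q _
      rfl
  rw [h2]
  have h3 : ∀ q ∈ Finset.univ.filter (fun q : Fin 9 × Fin 9 => q.1 < q.2),
      g q.1 q.2 = r q.1 - r q.2 := by
    intro q hq
    simp only [Finset.mem_filter] at hq
    simp [hg, (ne_of_lt hq.2).symm]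
  have h4 : ∀ q ∈ Finset.univ.filter (fun q : Fin 9 × Fin 9 => q.1 < q.2),
      g q.2 q.1 = -(r q.1 - r q.2) := by
    intro q hq
    simp only [Finset.mem_filter] at hq
    simp [hg, (ne_of_lt hq.2)]
  rw [Finset.prod_congr rfl h3, Finset.prod_congr rfl h4]
  have h5 : ∏ q ∈ Finset.univ.filter (fun q : Fin 9 × Fin 9 => q.1 < q.2), (-(r q.1 - r q.2))
      = (-1)^((Finset.univ.filter (fun q : Fin 9 × Fin 9 => q.1 < q.2)).card)
        * ∏ q ∈ Finset.univ.filter (fun q : Fin 9 × Fin 9 => q.1 < q.2), (r q.1 - r q.2) := by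
    rw [← Finset.prod_const, ← Finset.prod_mul_distrib]
    exact Finset.prod_congr rfl fun q _ => by ring
  have hcard : (Finset.univ.filter (fun q : Fin 9 × Fin 9 => q.1 < q.2)).card = 36 := by decide
  rw [h5, hcard, Finset.prod_pow]
  ring

/-- The discriminant of `f²(z) - x` over `ℚ(x)`, computed as
`lc^{2·9-2} ∏_{i<j} (rᵢ - rⱼ)²` from any enumeration `r` of its 9 roots in an algebraic
closure of `ℚ(x)`, equals `[2^16 · 3^9 · x²(x-1)²]²`; in particular it is a square. -/
theorem disc_f2 (r : Fin 9 → AlgebraicClosure (RatFunc ℚ))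
    (hr : (p2.map (algebraMap (RatFunc ℚ) (AlgebraicClosure (RatFunc ℚ)))).roots
      = Multiset.map r Finset.univ.val) :
    (algebraMap (RatFunc ℚ) (AlgebraicClosure (RatFunc ℚ)) p2.leadingCoeff) ^ (2 * 9 - 2) *
      ∏ q ∈ Finset.univ.filter (fun q : Fin 9 × Fin 9 => q.1 < q.2), (r q.1 - r q.2) ^ 2
    = algebraMap (RatFunc ℚ) (AlgebraicClosure (RatFunc ℚ))
        ((2 ^ 16 * 3 ^ 9 * RatFunc.X ^ 2 * (RatFunc.X - 1) ^ 2) ^ 2) := by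
  classical
  set φ : RatFunc ℚ →+* K := (algebraMap (RatFunc ℚ) K : RatFunc ℚ →+* K) with hφdef
  set x : K := φ RatFunc.X with hxdef
  -- product representation of p2 over the algebraic closure
  have hP : p2.map φ = C (φ 16) * ∏ i : Fin 9, (X - C (r i)) := by
    rw [Finset.prod_eq_multiset_prod]
    have h := (IsAlgClosed.splits (p2.map φ)).eq_prod_roots
    rw [leadingCoeff_map, hr, p2_lc, Multiset.map_map] at h
    exact h
  -- evaluation of p2 over K
  have hev : ∀ c : RatFunc ℚ, φ (p2.eval c) = φ 16 * ∏ i : Fin 9, (φ c - r i) := by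
    intro c
    have h1 : (p2.map φ).eval (φ c) = φ (p2.eval c) := by
      rw [eval_map, eval₂_at_apply]
    rw [← h1, hP, eval_mul, eval_C, eval_prod]
    simp
  set A : K := ∏ i : Fin 9, r i with hA
  set B : K := ∏ i : Fin 9, (r i - 1) with hB
  set G : K := ∏ i : Fin 9, (3 - 2 * r i) with hG
  set H : K := ∏ i : Fin 9, (-(2 * r i + 1)) with hH
  have hKchar : (16 : K) ≠ 0 := by norm_num
  have e1 : φ 16 * A = x := by
    have h := hev 0
    rw [ev0, map_neg] at h
    have hp : ∏ i : Fin 9, (φ 0 - r i) = -A := by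
      rw [hA, show (∏ i : Fin 9, (φ 0 - r i)) = ∏ i : Fin 9, ((-1 : K) * r i) from
        Finset.prod_congr rfl fun i _ => by simp, Finset.prod_mul_distrib]
      norm_num
    rw [hp] at h
    linear_combination h
  have e2 : φ 16 * B = x - 1 := by
    have h := hev 1
    rw [ev1, map_sub, map_one] at h
    have hp : ∏ i : Fin 9, ((1:K) - r i) = -B := by
      rw [hB, show (∏ i : Fin 9, ((1:K) - r i)) = ∏ i : Fin 9, ((-1 : K) * (r i - 1)) from
        Finset.prod_congr rfl fun i _ => by ring, Finset.prod_mul_distrib]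
      norm_num
    rw [hp] at h
    linear_combination h
  have e3 : φ 16 * G = -(2^9) * x := by
    have h := hev (3/2)
    rw [ev32, map_neg] at h
    have hp : ∏ i : Fin 9, (φ (3/2) - r i) = (2⁻¹ : K)^9 * G := by
      rw [hG, show (∏ i : Fin 9, (φ (3/2) - r i)) = ∏ i : Fin 9, ((2⁻¹ : K) * (3 - 2 * r i)) from
        Finset.prod_congr rfl fun i _ => by
          rw [map_div₀, map_ofNat, map_ofNat]; ring, Finset.prod_mul_distrib]
      simp
    rw [hp] at h
    linear_combination (-(2:K)^9) * h
  have e4 : φ 16 * H = 2^9 * (1 - x) := by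
    have h := hev (-(1/2))
    rw [evm, map_sub, map_one] at h
    have hp : ∏ i : Fin 9, (φ (-(1/2)) - r i) = (2⁻¹ : K)^9 * H := by
      rw [hH, show (∏ i : Fin 9, (φ (-(1/2)) - r i)) = ∏ i : Fin 9, ((2⁻¹ : K) * (-(2 * r i + 1))) from
        Finset.prod_congr rfl fun i _ => by
          rw [map_neg, map_div₀, map_one, map_ofNat]; ring, Finset.prod_mul_distrib]
      simp
    rw [hp] at h
    linear_combination (-(2:K)^9) * h
  -- derivative evaluations
  have hkey : ∀ k : Fin 9, eval (r k) (derivative (p2.map φ))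
      = φ 16 * ∏ j ∈ Finset.univ.erase k, (r k - r j) := by
    intro k
    rw [hP, derivative_C_mul, eval_mul, eval_C, deriv_eval_aux r k]
  have hdk : ∀ k : Fin 9, eval (r k) (derivative (p2.map φ))
      = 36 * (r k * (r k - 1)) * ((r k)^2 * (3 - 2 * r k)) * ((r k - 1)^2 * (-(2 * r k + 1))) := by
    intro k
    rw [derivative_map, hderiv]
    simp
  set T : K := ∏ k : Fin 9, ∏ j ∈ Finset.univ.erase k, (r k - r j) with hT
  have hTkey : φ 16 ^ 9 * T = 36^9 * (A^3 * B^3 * G * H) := by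
    have h : ∏ k : Fin 9, (φ 16 * ∏ j ∈ Finset.univ.erase k, (r k - r j))
        = ∏ k : Fin 9, (36 * (r k * (r k - 1)) * ((r k)^2 * (3 - 2 * r k))
            * ((r k - 1)^2 * (-(2 * r k + 1)))) :=
      Finset.prod_congr rfl fun k _ => (hkey k).symm.trans (hdk k)
    rw [Finset.prod_mul_distrib, Finset.prod_const] at h
    simp only [Finset.card_univ, Fintype.card_fin] at h
    rw [← hT] at h
    rw [h]
    rw [show (∏ k : Fin 9, (36 * (r k * (r k - 1)) * ((r k)^2 * (3 - 2 * r k))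
        * ((r k - 1)^2 * (-(2 * r k + 1)))))
      = ∏ k : Fin 9, ((36:K) * ((r k) * (r k - 1) * (r k)^2 * (r k - 1)^2
        * (3 - 2 * r k) * (-(2 * r k + 1)))) from Finset.prod_congr rfl fun k _ => by ring]
    simp only [Finset.prod_mul_distrib, Finset.prod_const, Finset.prod_pow,
      Finset.card_univ, Fintype.card_fin]
    rw [← hA, ← hB, ← hG, ← hH]
    ring
  -- final assembly
  have hφ16 : φ 16 = (16 : K) := map_ofNat φ 16
  have hPi : ∏ q ∈ Finset.univ.filter (fun q : Fin 9 × Fin 9 => q.1 < q.2), (r q.1 - r q.2) ^ 2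
      = T := (offdiag_aux r).symm
  rw [p2_lc, hPi, hφ16]
  rw [show (2 * 9 - 2) = 16 from rfl]
  have hRHS : φ ((2 ^ 16 * 3 ^ 9 * RatFunc.X ^ 2 * (RatFunc.X - 1) ^ 2) ^ 2)
      = (2 ^ 16 * 3 ^ 9 * x ^ 2 * (x - 1) ^ 2) ^ 2 := by
    rw [hxdef]
    push_cast [map_pow, map_mul, map_sub, map_one, map_ofNat]
    ring
  rw [hRHS]
  rw [hφ16] at hTkey e1 e2 e3 e4
  have h16 : (16:K)^9 ≠ 0 := by norm_num
  have eT : T = 36^9 * (A^3 * B^3 * G * H) / 16^9 := by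
    rw [eq_div_iff h16]; linear_combination hTkey
  have eA : A = x / 16 := by rw [eq_div_iff hKchar]; linear_combination e1
  have eB : B = (x - 1) / 16 := by rw [eq_div_iff hKchar]; linear_combination e2
  have eG : G = -(2^9) * x / 16 := by rw [eq_div_iff hKchar]; linear_combination e3
  have eH : H = 2^9 * (1 - x) / 16 := by rw [eq_div_iff hKchar]; linear_combination e4
  rw [eT, eA, eB, eG, eH]
  field_simp
  ring
end

section
/- Let K be a number field with a prime q lying over 3 such that v_q(x) = 1 for some x ∈ K. For f(z) = −2z³ + 3z², the polynomial f^n(z) − x is Eisenstein at q for every n ≥ 1; in particular, f^n(z) − x is irreducible over K for all n ≥ 1. -/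
open Polynomial IsDedekindDomain

namespace Stmt9Aux

lemma lt_one_iff_le (γ : WithZero (Multiplicative ℤ)) :
    γ < 1 ↔ γ ≤ (Multiplicative.ofAdd (-1 : ℤ) : Multiplicative ℤ) := by
  rcases eq_or_ne γ 0 with rfl | hne
  · simp
  · obtain ⟨g, rfl⟩ := WithZero.ne_zero_iff_exists.mp hne
    rw [← WithZero.coe_one, WithZero.coe_lt_coe, WithZero.coe_le_coe]
    have hg : g = Multiplicative.ofAdd (Multiplicative.toAdd g) := rfl
    rw [hg, show (1 : Multiplicative ℤ) = Multiplicative.ofAdd (0 : ℤ) from rfl,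
      Multiplicative.ofAdd_lt, Multiplicative.ofAdd_le]
    omega

/-- The `n`-th iterate of `z ↦ -2z³+3z²` as a polynomial. -/
noncomputable def G (R : Type*) [CommRing R] (m : ℕ) : Polynomial R :=
  (fun g => (-2 * X ^ 3 + 3 * X ^ 2 : Polynomial R).comp g)^[m] X

lemma G_zero (R : Type*) [CommRing R] : G R 0 = X := rfl

lemma G_succ (R : Type*) [CommRing R] (m : ℕ) :
    G R (m + 1) = (-2 * X ^ 3 + 3 * X ^ 2 : Polynomial R).comp (G R m) :=
  Function.iterate_succ_apply' _ _ _

lemma G_map {R S : Type*} [CommRing R] [CommRing S] (f : R →+* S) (m : ℕ) :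
    (G R m).map f = G S m := by
  induction m with
  | zero => simp [G_zero]
  | succ m ih =>
    rw [G_succ, G_succ, Polynomial.map_comp, ih]
    congr 1
    simp only [Polynomial.map_add, Polynomial.map_mul, Polynomial.map_pow, Polynomial.map_X,
      Polynomial.map_neg, Polynomial.map_ofNat]

lemma G_natDegree {R : Type*} [CommRing R] [IsDomain R] (h2 : (-2 : R) ≠ 0) (m : ℕ) :
    (G R m).natDegree = 3 ^ m := by
  have hF : (-2 * X ^ 3 + 3 * X ^ 2 : Polynomial R).natDegree = 3 := by
    compute_degree!
    exact fun h => h2 (neg_eq_zero.mpr h)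
  induction m with
  | zero => simp [G_zero]
  | succ m ih =>
    rw [G_succ, natDegree_comp, hF, ih, pow_succ]
    ring

lemma G_eq_of_three_eq_zero {k : Type*} [CommRing k] (h3 : (3 : k) = 0) (m : ℕ) :
    G k m = X ^ 3 ^ m := by
  have hF : (-2 * X ^ 3 + 3 * X ^ 2 : Polynomial k) = X ^ 3 := by
    have hm2 : (-2 : k) = 1 := by
      have : (-2 : k) = 1 + -3 := by ring
      rw [this, show (-3 : k) = -(3 : k) from rfl, h3]
      ring
    have h3' : (3 : Polynomial k) = C 3 := (map_ofNat C 3).symm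
    have hm2' : (-2 : Polynomial k) = C (-2) := by
      rw [map_neg, map_ofNat]
    rw [h3', hm2', hm2, h3]
    simp
  induction m with
  | zero => simp [G_zero]
  | succ m ih =>
    rw [G_succ, hF, ih, pow_comp, X_comp, ← pow_mul, ← pow_succ]

lemma G_coeff_zero {R : Type*} [CommRing R] (m : ℕ) : (G R m).coeff 0 = 0 := by
  induction m with
  | zero => simp [G_zero]
  | succ m ih =>
    rw [coeff_zero_eq_eval_zero] at ih ⊢
    rw [G_succ, eval_comp, ih]
    simp

end Stmt9Aux

open Stmt9Aux

/-- If `K` is a number field, `q` a prime of `K` over `3`, and `x ∈ K` with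
`v_q(x) = 1`, then for every `n ≥ 1` the polynomial `fⁿ(z) - x` (where `f(z) = -2z³+3z²`)
is Eisenstein at `q` — its leading coefficient is a `q`-unit, all lower coefficients have
positive `q`-valuation, and the constant term has `v_q = 1` — and is irreducible over `K`. -/
theorem eisenstein_irreducible (K : Type*) [Field K] [NumberField K]
    (q : HeightOneSpectrum (NumberField.RingOfIntegers K))
    (hq3 : (3 : NumberField.RingOfIntegers K) ∈ q.asIdeal)
    (x : K) (hx : q.valuation K x = (Multiplicative.ofAdd (-1 : ℤ) : Multiplicative ℤ))
    (n : ℕ) (hn : 1 ≤ n) :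
    let p : Polynomial K :=
      (fun g => (-2 * X ^ 3 + 3 * X ^ 2 : Polynomial K).comp g)^[n] X - C x
    q.valuation K ((p.leadingCoeff : K)) = 1 ∧
    (∀ i < p.natDegree, q.valuation K (p.coeff i) < 1) ∧
    q.valuation K (p.coeff 0) = (Multiplicative.ofAdd (-1 : ℤ) : Multiplicative ℤ) ∧
    Irreducible p := by
  intro p
  set v : Valuation K (WithZero (Multiplicative ℤ)) := q.valuation K with hv
  set A : ValuationSubring K := v.valuationSubring with hA
  have hp : p = G K n - C x := rfl
  -- basic valuation facts
  have h3 : v (3 : K) < 1 := by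
    have h := (q.valuation_lt_one_iff_dvd (K := K) (3 : NumberField.RingOfIntegers K)).2
      (Ideal.dvd_span_singleton.mpr hq3)
    simpa [map_ofNat] using h
  have hxlt : v x < 1 := by rw [hx]; exact WithZero.coe_lt_one.mpr (by decide)
  have hmax : ∀ a : A, a ∈ IsLocalRing.maximalIdeal A ↔ v (a : K) < 1 := by
    intro a
    rw [ValuationSubring.valuation_lt_one_iff]
    exact ((Valuation.isEquiv_valuation_valuationSubring v).lt_one_iff_lt_one).symm
  -- elements of A
  set xA : A := ⟨x, le_of_lt hxlt⟩ with hxA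
  set P : Polynomial A := G A n - C xA with hP
  have hinj : Function.Injective (algebraMap A K) := Subtype.coe_injective
  have hmap : P.map (algebraMap A K) = p := by
    rw [hP, Polynomial.map_sub, Polynomial.map_C, G_map, hp]
    rfl
  -- degrees
  have hm2A : (-2 : A) ≠ 0 := by
    intro h
    have h' : ((-2 : A) : K) = 0 := by rw [h]; rfl
    norm_num at h'
  have hPdeg : P.natDegree = 3 ^ n := by
    rw [hP, natDegree_sub_C, G_natDegree hm2A]
  have hpow_pos : 0 < 3 ^ n := pow_pos (by norm_num) n
  have hPne : P ≠ 0 := fun h => by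
    rw [h, natDegree_zero] at hPdeg
    omega
  -- residue field reduction
  set φ : A →+* IsLocalRing.ResidueField A := IsLocalRing.residue A with hφ
  have hker : ∀ a : A, φ a = 0 ↔ a ∈ IsLocalRing.maximalIdeal A := fun a =>
    Ideal.Quotient.eq_zero_iff_mem
  have hk3 : (3 : IsLocalRing.ResidueField A) = 0 := by
    have h : (3 : IsLocalRing.ResidueField A) = φ (3 : A) := by
      rw [map_ofNat]
    rw [h, hker, hmax]
    have h3' : ((3 : A) : K) = 3 := rfl
    rw [h3']; exact h3
  have hφx : φ xA = 0 := by rw [hker, hmax]; exact hxlt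
  have hredP : P.map φ = X ^ 3 ^ n := by
    rw [hP, Polynomial.map_sub, Polynomial.map_C, hφx, C_0, sub_zero, G_map,
      G_eq_of_three_eq_zero hk3]
  -- coefficient facts over A
  have hPcoeff : ∀ i, φ (P.coeff i)
      = (X ^ 3 ^ n : Polynomial (IsLocalRing.ResidueField A)).coeff i := by
    intro i
    rw [← coeff_map, hredP]
  have hlow : ∀ i < 3 ^ n, P.coeff i ∈ IsLocalRing.maximalIdeal A := by
    intro i hi
    rw [← hker, hPcoeff, coeff_X_pow, if_neg (by omega)]
  have hlcP : P.coeff (3 ^ n) ∉ IsLocalRing.maximalIdeal A := by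
    rw [← hker, hPcoeff, coeff_X_pow, if_pos rfl]
    exact one_ne_zero
  have hlcunit : IsUnit (P.coeff (3 ^ n)) := by
    by_contra h
    exact hlcP ((IsLocalRing.mem_maximalIdeal _).mpr h)
  -- constant coefficient
  have hP0 : P.coeff 0 = -xA := by
    rw [hP, coeff_sub, G_coeff_zero, coeff_C_zero, zero_sub]
  -- Eisenstein irreducibility over A
  have hprime : (IsLocalRing.maximalIdeal A).IsPrime :=
    (IsLocalRing.maximalIdeal.isMaximal A).isPrime
  have hnotsq : P.coeff 0 ∉ (IsLocalRing.maximalIdeal A) ^ 2 := by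
    intro hmem2
    have key : ∀ a ∈ (IsLocalRing.maximalIdeal A) ^ 2,
        v (a : K) ≤ (Multiplicative.ofAdd (-2 : ℤ) : Multiplicative ℤ) := by
      intro a ha
      rw [pow_two] at ha
      refine Submodule.mul_induction_on ha (fun b hb c hc => ?_) (fun b c ihb ihc => ?_)
      · have hb' := (Stmt9Aux.lt_one_iff_le _).mp ((hmax b).mp hb)
        have hc' := (Stmt9Aux.lt_one_iff_le _).mp ((hmax c).mp hc)
        have hbc : ((b * c : A) : K) = (b : K) * (c : K) := rfl
        rw [hbc, v.map_mul]
        calc v (b:K) * v (c:K) ≤ ((Multiplicative.ofAdd (-1 : ℤ) : Multiplicative ℤ)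
              : WithZero (Multiplicative ℤ))
              * ((Multiplicative.ofAdd (-1 : ℤ) : Multiplicative ℤ)
              : WithZero (Multiplicative ℤ)) := mul_le_mul' hb' hc'
          _ = (Multiplicative.ofAdd (-2 : ℤ) : Multiplicative ℤ) := by
              rw [← WithZero.coe_mul, ← ofAdd_add]
              norm_num
      · have hbc : ((b + c : A) : K) = (b : K) + (c : K) := rfl
        rw [hbc]
        exact le_trans (v.map_add _ _) (max_le ihb ihc)
    have hle := key _ hmem2
    rw [hP0] at hle
    have hval : v ((-xA : A) : K) = (Multiplicative.ofAdd (-1 : ℤ) : Multiplicative ℤ) := by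
      have h' : ((-xA : A) : K) = -x := rfl
      rw [h', v.map_neg, hx]
    rw [hval, WithZero.coe_le_coe] at hle
    exact absurd hle (by decide)
  have hPirr : Irreducible P := by
    apply Polynomial.irreducible_of_eisenstein_criterion hprime
    · rw [Polynomial.leadingCoeff, hPdeg]; exact hlcP
    · intro i hi
      rw [Polynomial.degree_eq_natDegree hPne, hPdeg, Nat.cast_lt] at hi
      exact hlow i hi
    · rw [Polynomial.degree_eq_natDegree hPne, hPdeg]
      exact_mod_cast hpow_pos
    · exact hnotsq
    · intro r hr
      have hdvd : r ∣ P.coeff (3 ^ n) := (Polynomial.C_dvd_iff_dvd_coeff r P).mp hr (3 ^ n)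
      exact isUnit_of_dvd_unit hdvd hlcunit
  -- transfer irreducibility to K
  haveI : IsIntegrallyClosed A := by
    apply Valuation.Integers.isIntegrallyClosed (v := v)
    exact ⟨Subtype.coe_injective, fun a => a.2, fun r hr => ⟨⟨r, hr⟩, rfl⟩⟩
  obtain ⟨u, hu⟩ := hlcunit
  set M : Polynomial A := C ((u⁻¹ : Aˣ) : A) * P with hM
  have hMmonic : M.Monic := by
    rw [Monic, hM, leadingCoeff_mul, leadingCoeff_C, Polynomial.leadingCoeff, hPdeg, ← hu]
    exact Units.inv_mul u
  have hassoc : Associated P M := by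
    refine ⟨(Units.map (C : A →+* Polynomial A).toMonoidHom) u⁻¹, ?_⟩
    rw [hM, mul_comm]
    rfl
  have hMirr : Irreducible M := hassoc.irreducible hPirr
  have hMKirr : Irreducible (M.map (algebraMap A K)) :=
    (Polynomial.Monic.irreducible_iff_irreducible_map_fraction_map hMmonic).mp hMirr
  have hMK : M.map (algebraMap A K) = C (((u⁻¹ : Aˣ) : A) : K) * p := by
    rw [hM, Polynomial.map_mul, Polynomial.map_C, hmap]
    rfl
  have hCunit : IsUnit (C ((((u⁻¹ : Aˣ) : A) : K)) : Polynomial K) := by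
    apply Polynomial.isUnit_C.mpr
    apply isUnit_iff_ne_zero.mpr
    intro h
    have h0 : ((u⁻¹ : Aˣ) : A) = 0 := Subtype.coe_injective h
    exact (u⁻¹ : Aˣ).ne_zero h0
  have hpassoc : Associated p (M.map (algebraMap A K)) :=
    ⟨hCunit.unit, by rw [hMK, IsUnit.unit_spec, mul_comm]⟩
  have hpirr : Irreducible p := hpassoc.symm.irreducible hMKirr
  -- coefficient valuations in K
  have hpcoeff : ∀ i, p.coeff i = ((P.coeff i : A) : K) := by
    intro i
    rw [← hmap, coeff_map]
    rfl
  have hpdeg : p.natDegree = 3 ^ n := by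
    rw [← hmap, Polynomial.natDegree_map_eq_of_injective hinj, hPdeg]
  have hlcval : v (p.leadingCoeff) = 1 := by
    rw [Polynomial.leadingCoeff, hpdeg, hpcoeff]
    have h1 : v ((P.coeff (3^n) : A) : K) ≤ 1 := (P.coeff (3^n)).2
    rcases lt_or_eq_of_le h1 with h | h
    · exact absurd ((hmax _).mpr h) hlcP
    · exact h
  refine ⟨hlcval, ?_, ?_, hpirr⟩
  · intro i hi
    rw [hpdeg] at hi
    rw [hpcoeff]
    exact (hmax _).mp (hlow i hi)
  · rw [hpcoeff, hP0]
    have h' : ((-xA : A) : K) = -x := rfl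
    rw [h', v.map_neg, hx]
end

section
/- Let N(z) = 2z²/(3z² − 1) be the Newton map of g(z) = z³ − z, and let η(z) = 1/(1 − 2z). Then η^{-1} ∘ N ∘ η (z) = −2z³ + 3z² as rational functions, i.e., the Newton map of z³ − z is Möbius-conjugate to the polynomial f(z) = −2z³ + 3z². -/
/-- The Newton map `N(z) = 2z³/(3z²-1)` of `g(z) = z³ - z` is conjugate,
via the Möbius transformation `η(z) = 1/(1-2z)` (with inverse `η⁻¹(w) = (w-1)/(2w)`), to
the polynomial `f(z) = -2z³ + 3z²`: as rational functions, `η⁻¹ ∘ N ∘ η = f`. -/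
theorem newton_conjugate :
    let N : RatFunc ℚ → RatFunc ℚ := fun w => 2 * w ^ 3 / (3 * w ^ 2 - 1)
    let η : RatFunc ℚ → RatFunc ℚ := fun z => 1 / (1 - 2 * z)
    let ηinv : RatFunc ℚ → RatFunc ℚ := fun w => (w - 1) / (2 * w)
    ηinv (η RatFunc.X) = RatFunc.X ∧
    ηinv (N (η RatFunc.X)) = -2 * RatFunc.X ^ 3 + 3 * RatFunc.X ^ 2 := by
  intro N η ηinv
  have hinj := IsFractionRing.injective (Polynomial ℚ) (RatFunc ℚ)
  have hmap : ∀ p : Polynomial ℚ, p ≠ 0 →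
      (algebraMap (Polynomial ℚ) (RatFunc ℚ) p) ≠ 0 := by
    intro p hp h
    exact hp (hinj (by simpa using h))
  have h1 : (1 - 2 * RatFunc.X : RatFunc ℚ) ≠ 0 := by
    have := hmap (1 - 2 * Polynomial.X) (by
      intro h
      have := congrArg (Polynomial.eval 0) h
      simp at this)
    simpa [map_sub, map_mul, map_one, map_ofNat, RatFunc.algebraMap_X] using this
  have h1' : (3 - (1 - 2 * RatFunc.X) ^ 2 : RatFunc ℚ) ≠ 0 := by
    have := hmap (3 - (1 - 2 * Polynomial.X) ^ 2) (by
      intro h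
      have := congrArg (Polynomial.eval 0) h
      norm_num at this)
    simpa [map_sub, map_mul, map_pow, map_one, map_ofNat, RatFunc.algebraMap_X] using this
  have h2 : (3 * (1 / (1 - 2 * RatFunc.X))^2 - 1 : RatFunc ℚ) ≠ 0 := by
    have heq : (3 * (1 / (1 - 2 * RatFunc.X))^2 - 1 : RatFunc ℚ)
        = (3 - (1 - 2 * RatFunc.X)^2) / (1 - 2 * RatFunc.X)^2 := by
      field_simp
    rw [heq]
    exact div_ne_zero h1' (pow_ne_zero _ h1)
  have h2ne : (2 : RatFunc ℚ) ≠ 0 := by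
    have := hmap (Polynomial.C 2) (by simp)
    simpa using this
  have h4 : (4 - RatFunc.X * 16 + RatFunc.X ^ 2 * 16 : RatFunc ℚ) ≠ 0 := by
    have heq : (4 - RatFunc.X * 16 + RatFunc.X ^ 2 * 16 : RatFunc ℚ)
        = (2 * (1 - 2 * RatFunc.X)) ^ 2 := by ring
    rw [heq]
    exact pow_ne_zero _ (mul_ne_zero h2ne h1)
  simp only [N, η, ηinv]
  constructor
  · field_simp
    ring
  · field_simp
    ring
end

section
/- Let φ(t) = t − t²/2 + t³/3. Then φ is strictly increasing on (0,1), and the iterates satisfy φ^n(1) = (2/n)(1 + O(log n / n)) as n → ∞. More precisely, 1/φ^n(1) = n/2 + O(log n). -/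
noncomputable def psi (z : ℝ) : ℝ := z + 1/2 - (z + 2)/(2*(6*z^2 - 3*z + 2))

lemma denom_pos (z : ℝ) : 0 < 6*z^2 - 3*z + 2 := by nlinarith [sq_nonneg (4*z - 1)]

lemma psi_le (z : ℝ) (hz : 0 < z) : psi z ≤ z + 1/2 := by
  have hD := denom_pos z
  have : 0 ≤ (z + 2)/(2*(6*z^2 - 3*z + 2)) := by positivity
  unfold psi; linarith

lemma psi_ge_sub (z : ℝ) (hz : 0 < z) : z + 1/2 - 1/(3*z) ≤ psi z := by
  have hD := denom_pos z
  have h : (z + 2)/(2*(6*z^2 - 3*z + 2)) ≤ 1/(3*z) := by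
    rw [div_le_div_iff₀ (by linarith) (by linarith)]
    nlinarith [sq_nonneg (3*z - 2)]
  unfold psi; linarith

lemma psi_ge (z : ℝ) (hz : 1 ≤ z) : z + 1/5 ≤ psi z := by
  have hD := denom_pos z
  have h : (z + 2)/(2*(6*z^2 - 3*z + 2)) ≤ 3/10 := by
    rw [div_le_div_iff₀ (by linarith) (by norm_num)]
    nlinarith
  unfold psi; linarith

lemma lb : ∀ n : ℕ, ((n : ℝ) + 5)/5 ≤ psi^[n] 1 := by
  intro n
  induction n with
  | zero => norm_num
  | succ n ih =>
    have h1 : (1:ℝ) ≤ psi^[n] 1 := by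
      refine le_trans ?_ ih
      have : (0:ℝ) ≤ (n:ℝ) := Nat.cast_nonneg n
      linarith
    rw [Function.iterate_succ_apply']
    have := psi_ge _ h1
    push_cast
    linarith

lemma one_le_iter (n : ℕ) : (1:ℝ) ≤ psi^[n] 1 := by
  refine le_trans ?_ (lb n)
  have : (0:ℝ) ≤ (n:ℝ) := Nat.cast_nonneg n
  linarith

lemma phi_one_div (z : ℝ) (hz : 1 ≤ z) :
    (fun t : ℝ => t - t ^ 2 / 2 + t ^ 3 / 3) (1/z) = 1 / psi z := by
  have hz0 : (0:ℝ) < z := by linarith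
  have hD := denom_pos z
  have hpsi : psi z = 6*z^3/(6*z^2 - 3*z + 2) := by
    unfold psi
    rw [eq_div_iff hD.ne', sub_mul, div_mul_eq_mul_div, mul_comm 2 (6*z^2 - 3*z + 2), ← div_div,
      mul_div_cancel_right₀ _ hD.ne']
    ring
  rw [hpsi]
  simp only
  rw [div_div_eq_mul_div, one_mul]
  field_simp
  ring

lemma iter_eq (n : ℕ) : (fun t : ℝ => t - t ^ 2 / 2 + t ^ 3 / 3)^[n] 1 = 1 / psi^[n] 1 := by
  induction n with
  | zero => norm_num
  | succ n ih =>
    rw [Function.iterate_succ_apply', ih, Function.iterate_succ_apply' psi]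
    exact phi_one_div _ (one_le_iter n)

lemma log_gap (a : ℝ) (ha : 0 < a) : 1/(a+1) ≤ Real.log (a+1) - Real.log a := by
  have h := Real.log_le_sub_one_of_pos (show (0:ℝ) < a/(a+1) by positivity)
  rw [Real.log_div (by linarith) (by linarith)] at h
  have h2 : a/(a+1) - 1 = -(1/(a+1)) := by field_simp; ring
  linarith

lemma iter_ub (n : ℕ) : psi^[n] 1 ≤ 1 + (n:ℝ)/2 := by
  induction n with
  | zero => norm_num
  | succ n ih =>
    rw [Function.iterate_succ_apply']
    have h0 : (0:ℝ) < psi^[n] 1 := lt_of_lt_of_le one_pos (one_le_iter n)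
    have := psi_le _ h0
    push_cast
    linarith

lemma iter_lb (n : ℕ) :
    1 + (n:ℝ)/2 - (5/3)*(Real.log ((n:ℝ)+4) - Real.log 4) ≤ psi^[n] 1 := by
  induction n with
  | zero => norm_num
  | succ n ih =>
    rw [Function.iterate_succ_apply']
    have hn0 : (0:ℝ) ≤ (n:ℝ) := Nat.cast_nonneg n
    have h1 : (1:ℝ) ≤ psi^[n] 1 := one_le_iter n
    have h0 : (0:ℝ) < psi^[n] 1 := lt_of_lt_of_le one_pos h1
    have hlb := lb n
    have hgap := log_gap ((n:ℝ)+4) (by linarith)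
    have hstep := psi_ge_sub _ h0
    have hinv : 1/(3*psi^[n] 1) ≤ 5/(3*((n:ℝ)+5)) := by
      rw [div_le_div_iff₀ (by linarith) (by linarith)]
      linarith
    push_cast
    have h45 : (n:ℝ)+4+1 = (n:ℝ)+1+4 := by ring
    rw [h45] at hgap
    have : 5/(3*((n:ℝ)+5)) ≤ (5/3)*(Real.log ((n:ℝ)+1+4) - Real.log ((n:ℝ)+4)) := by
      have : 5/(3*((n:ℝ)+5)) = (5/3)*(1/((n:ℝ)+4+1)) := by field_simp; ring
      rw [this]
      have h53 : (0:ℝ) ≤ 5/3 := by norm_num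
      rw [h45]
      nlinarith [hgap]
    linarith

lemma abs_bound (n : ℕ) (hn : 2 ≤ n) :
    |psi^[n] 1 - (n:ℝ)/2| ≤ 7 * Real.log n := by
  have hn2 : (2:ℝ) ≤ (n:ℝ) := by exact_mod_cast hn
  have hL2 : Real.log 2 ≤ Real.log n := Real.log_le_log (by norm_num) hn2
  have hL07 : (0.6931471803:ℝ) < Real.log 2 := Real.log_two_gt_d9
  have hL : (0:ℝ) < Real.log n := by linarith
  have hlog4 : (0:ℝ) ≤ Real.log 4 := Real.log_nonneg (by norm_num)
  have hcube : (n:ℝ) + 4 ≤ (n:ℝ)^3 := by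
    nlinarith [mul_le_mul_of_nonneg_left hn2 (sq_nonneg (n:ℝ)),
      mul_le_mul_of_nonneg_right hn2 (by linarith : (0:ℝ) ≤ (n:ℝ))]
  have hn4 : Real.log ((n:ℝ)+4) ≤ 3 * Real.log n := by
    calc Real.log ((n:ℝ)+4) ≤ Real.log ((n:ℝ)^3) := Real.log_le_log (by linarith) hcube
    _ = 3 * Real.log n := by rw [Real.log_pow]; norm_num
  have hub := iter_ub n
  have hlbn := iter_lb n
  rw [abs_le]
  constructor
  · nlinarith
  · nlinarith

/-- `φ(t) = t - t²/2 + t³/3` is strictly increasing on `(0,1)`, and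
`φⁿ(1) = (2/n)(1 + O(log n / n))`; more precisely `1/φⁿ(1) = n/2 + O(log n)`. -/
theorem phi_iterates :
    let φ : ℝ → ℝ := fun t => t - t ^ 2 / 2 + t ^ 3 / 3
    StrictMonoOn φ (Set.Ioo 0 1) ∧
    (∃ C : ℝ, ∀ n : ℕ, 2 ≤ n → |φ^[n] 1 - 2 / (n : ℝ)| ≤ C * Real.log n / (n : ℝ) ^ 2) ∧
    (∃ C : ℝ, ∀ n : ℕ, 2 ≤ n → |1 / φ^[n] 1 - (n : ℝ) / 2| ≤ C * Real.log n) := by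
  intro φ
  refine ⟨?_, ⟨70, ?_⟩, ⟨7, ?_⟩⟩
  · intro x hx y hy hxy
    simp only [φ]
    have hb : (0:ℝ) < 1 - (x+y)/2 + (x^2+x*y+y^2)/3 := by
      nlinarith [sq_nonneg (x+y-1), sq_nonneg (x-y)]
    nlinarith [mul_pos (sub_pos.2 hxy) hb]
  · intro n hn
    have hn2 : (2:ℝ) ≤ (n:ℝ) := by exact_mod_cast hn
    have hy1 : (1:ℝ) ≤ psi^[n] 1 := one_le_iter n
    have hy0 : (0:ℝ) < psi^[n] 1 := by linarith
    have hy5 : (n:ℝ)/5 ≤ psi^[n] 1 := le_trans (by linarith) (lb n)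
    have hd := abs_bound n hn
    have hL : (0:ℝ) ≤ Real.log n := Real.log_nonneg (by linarith)
    rw [show φ^[n] 1 = 1 / psi^[n] 1 from iter_eq n]
    set y := psi^[n] 1 with hy
    have hn0 : (0:ℝ) < (n:ℝ) := by linarith
    have key : 1/y - 2/(n:ℝ) = ((n:ℝ) - 2*y)/((n:ℝ)*y) := by
      rw [div_sub_div _ _ (ne_of_gt hy0) (ne_of_gt hn0),
        div_eq_div_iff (by positivity) (by positivity)]
      ring
    have hneg : (n:ℝ) - 2*y = -(2*(y - (n:ℝ)/2)) := by ring
    rw [key, hneg, abs_div, abs_neg, abs_mul, abs_two,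
      abs_of_pos (by positivity : (0:ℝ) < (n:ℝ)*y)]
    rw [div_le_div_iff₀ (by positivity) (by positivity)]
    nlinarith [mul_nonneg (mul_nonneg hL (by linarith : (0:ℝ) ≤ (n:ℝ)))
        (by linarith : (0:ℝ) ≤ 5*y - (n:ℝ)),
      mul_le_mul_of_nonneg_right hd (sq_nonneg (n:ℝ)), abs_nonneg (y - (n:ℝ)/2)]
  · intro n hn
    have hy1 : (1:ℝ) ≤ psi^[n] 1 := one_le_iter n
    rw [show φ^[n] 1 = 1 / psi^[n] 1 from iter_eq n, one_div_one_div]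
    exact abs_bound n hn
end

section
/- Let ψ(z) = z + 1/2 − (z+2)/(2(6z² − 3z + 2)). Then for all n ≥ 1, ψ^n(1) ≥ (n+5)/5. -/
lemma psi_step (z : ℝ) (hz : 1 ≤ z) :
    z + 1 / 5 ≤ z + 1 / 2 - (z + 2) / (2 * (6 * z ^ 2 - 3 * z + 2)) := by
  have hD : (0:ℝ) < 6 * z ^ 2 - 3 * z + 2 := by nlinarith
  have h : (z + 2) / (2 * (6 * z ^ 2 - 3 * z + 2)) ≤ 3 / 10 := by
    rw [div_le_iff₀ (by linarith)]
    nlinarith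
  linarith

/-- For `ψ(z) = z + 1/2 - (z+2)/(2(6z² - 3z + 2))`, the iterates satisfy
`ψⁿ(1) ≥ (n+5)/5` for all `n ≥ 1`. -/
theorem psi_iterates (n : ℕ) (hn : 1 ≤ n) :
    let ψ : ℝ → ℝ := fun z => z + 1 / 2 - (z + 2) / (2 * (6 * z ^ 2 - 3 * z + 2))
    ((n : ℝ) + 5) / 5 ≤ ψ^[n] 1 := by
  intro ψ
  induction n with
  | zero => omega
  | succ m ih =>
    rcases Nat.eq_or_lt_of_le hn with h1 | h1
    · have : m = 0 := by omega
      subst this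
      simp only [Function.iterate_one, ψ]
      norm_num
    · have hm : 1 ≤ m := by omega
      have ihm := ih hm
      have h1le : (1:ℝ) ≤ ψ^[m] 1 := by
        have : (1:ℝ) ≤ ((m:ℝ) + 5) / 5 := by
          have : (0:ℝ) ≤ (m:ℝ) := Nat.cast_nonneg m
          linarith
        linarith
      have := psi_step (ψ^[m] 1) h1le
      rw [Function.iterate_succ_apply']
      push_cast
      simp only [ψ]
      linarith
end
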